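/- Let (C,d) be a complete metric space, α ∈ [0,1), ψ ∈ Ψ_α, and T₁, T₂ : C → C satisfy d(T₁x, T₂y) ≤ ψ(d(x,y), d(x,T₁x), d(y,T₂y)). Let z be the unique common fixed point of T₁ and T₂ and let {u_n} be the alternating Picard sequence from any u₀. Then for all n ≥ 1, d(u_n, z) ≤ (α^{n-1}/(1−α)) · d(u₀, u₁). -/

import Mathlib

/-- Error estimate: the alternating Picard sequence converges to the common fixed
point z with d(uₙ, z) ≤ (α^{n-1}/(1-α)) · d(u₀, u₁). -/
theorem stmt6 {C : Type*} [MetricSpace C] [CompleteSpace C]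
    (α : ℝ) (hα0 : 0 ≤ α) (hα1 : α < 1)
    (ψ : ℝ → ℝ → ℝ → ℝ)
    (hcont : Continuous (fun p : ℝ × ℝ × ℝ => ψ p.1 p.2.1 p.2.2))
    (hnonneg : ∀ a b c : ℝ, 0 ≤ a → 0 ≤ b → 0 ≤ c → 0 ≤ ψ a b c)
    (hψ : ∀ a b : ℝ, 0 ≤ a → 0 ≤ b →
      (b ≤ ψ a a b ∨ b ≤ ψ b a a ∨ b ≤ ψ a b a) → b ≤ α * a)
    (T₁ T₂ : C → C)
    (hT : ∀ x y : C,
      dist (T₁ x) (T₂ y) ≤ ψ (dist x y) (dist x (T₁ x)) (dist y (T₂ y)))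
    (z : C) (hz : T₁ z = z ∧ T₂ z = z)
    (hzuniq : ∀ w : C, T₁ w = w ∧ T₂ w = w → w = z)
    (u : ℕ → C)
    (hu₁ : ∀ k : ℕ, u (2 * k + 1) = T₁ (u (2 * k)))
    (hu₂ : ∀ k : ℕ, u (2 * k + 2) = T₂ (u (2 * k + 1))) :
    ∀ n : ℕ, 1 ≤ n →
      dist (u n) z ≤ α ^ (n - 1) / (1 - α) * dist (u 0) (u 1) := by
  -- Step 1: one-step contraction of consecutive distances
  have hD : ∀ n, dist (u (n+1)) (u (n+2)) ≤ α * dist (u n) (u (n+1)) := by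
    intro n
    rcases Nat.even_or_odd n with ⟨k, hk⟩ | ⟨k, hk⟩
    · have hn : n = 2*k := by omega
      subst hn
      have h1 := hu₁ k
      have h2 := hu₂ k
      have key : dist (u (2*k+1)) (u (2*k+2)) ≤
          ψ (dist (u (2*k)) (u (2*k+1))) (dist (u (2*k)) (u (2*k+1)))
            (dist (u (2*k+1)) (u (2*k+2))) := by
        calc dist (u (2*k+1)) (u (2*k+2)) = dist (T₁ (u (2*k))) (T₂ (u (2*k+1))) := by
              conv_lhs => rw [h1, h2]
          _ ≤ ψ (dist (u (2*k)) (u (2*k+1))) (dist (u (2*k)) (T₁ (u (2*k))))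
              (dist (u (2*k+1)) (T₂ (u (2*k+1)))) := hT _ _
          _ = _ := by rw [← h1, ← h2]
      exact hψ _ _ dist_nonneg dist_nonneg (Or.inl key)
    · have hn : n = 2*k+1 := by omega
      subst hn
      have h1 := hu₂ k
      have h2 : u (2*k+3) = T₁ (u (2*k+2)) := by
        rw [show 2*k+3 = 2*(k+1)+1 by ring, show 2*k+2 = 2*(k+1) by ring]
        exact hu₁ (k+1)
      have key : dist (u (2*k+2)) (u (2*k+3)) ≤
          ψ (dist (u (2*k+1)) (u (2*k+2))) (dist (u (2*k+2)) (u (2*k+3)))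
            (dist (u (2*k+1)) (u (2*k+2))) := by
        calc dist (u (2*k+2)) (u (2*k+3)) = dist (T₁ (u (2*k+2))) (T₂ (u (2*k+1))) := by
              conv_lhs => rw [h1, h2]
              rw [dist_comm]
          _ ≤ ψ (dist (u (2*k+2)) (u (2*k+1))) (dist (u (2*k+2)) (T₁ (u (2*k+2))))
              (dist (u (2*k+1)) (T₂ (u (2*k+1)))) := hT _ _
          _ = _ := by rw [← h1, ← h2, dist_comm (u (2*k+2)) (u (2*k+1))]
      exact hψ _ _ dist_nonneg dist_nonneg (Or.inr (Or.inr key))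
  -- Step 2: geometric bound
  have hgeo : ∀ n, dist (u n) (u (n+1)) ≤ dist (u 0) (u 1) * α ^ n := by
    intro n
    induction n with
    | zero => simp
    | succ m ih =>
      calc dist (u (m+1)) (u (m+2)) ≤ α * dist (u m) (u (m+1)) := hD m
        _ ≤ α * (dist (u 0) (u 1) * α ^ m) := by
            exact mul_le_mul_of_nonneg_left ih hα0
        _ = dist (u 0) (u 1) * α ^ (m+1) := by ring
  -- Step 3: Cauchy and limit
  have hC : CauchySeq u := cauchySeq_of_le_geometric α (dist (u 0) (u 1)) hα1 hgeo
  obtain ⟨L, hL⟩ := cauchySeq_tendsto_of_complete hC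
  have taux : ∀ c : ℕ, Filter.Tendsto (fun k : ℕ => 2*k + c) Filter.atTop Filter.atTop := by
    intro c
    exact Filter.tendsto_atTop_atTop.mpr (fun b => ⟨b, fun a ha => by omega⟩)
  have t0 : Filter.Tendsto (fun k => u (2*k)) Filter.atTop (nhds L) := hL.comp (taux 0)
  have t1 : Filter.Tendsto (fun k => u (2*k+1)) Filter.atTop (nhds L) := hL.comp (taux 1)
  have t2 : Filter.Tendsto (fun k => u (2*k+2)) Filter.atTop (nhds L) := hL.comp (taux 2)
  -- Step 4: L is a fixed point of T₁
  have hT1L : T₁ L = L := by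
    have key : ∀ k, dist (T₁ L) (u (2*k+2)) ≤
        ψ (dist L (u (2*k+1))) (dist L (T₁ L)) (dist (u (2*k+1)) (u (2*k+2))) := by
      intro k
      have := hT L (u (2*k+1))
      rwa [← hu₂ k] at this
    have lhs : Filter.Tendsto (fun k => dist (T₁ L) (u (2*k+2))) Filter.atTop
        (nhds (dist (T₁ L) L)) := Filter.Tendsto.dist tendsto_const_nhds t2
    have rhs : Filter.Tendsto
        (fun k => ψ (dist L (u (2*k+1))) (dist L (T₁ L)) (dist (u (2*k+1)) (u (2*k+2))))
        Filter.atTop (nhds (ψ 0 (dist L (T₁ L)) 0)) := by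
      have ha : Filter.Tendsto (fun k => dist L (u (2*k+1))) Filter.atTop (nhds 0) := by
        have := Filter.Tendsto.dist (tendsto_const_nhds (x := L)) t1
        simpa using this
      have hc : Filter.Tendsto (fun k => dist (u (2*k+1)) (u (2*k+2))) Filter.atTop (nhds 0) := by
        have := Filter.Tendsto.dist t1 t2
        simpa using this
      have := (hcont.tendsto (0, dist L (T₁ L), 0)).comp
        (ha.prodMk_nhds ((tendsto_const_nhds (x := dist L (T₁ L))).prodMk_nhds hc))
      exact this
    have hle : dist (T₁ L) L ≤ ψ 0 (dist L (T₁ L)) 0 :=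
      le_of_tendsto_of_tendsto' lhs rhs key
    have hb : dist L (T₁ L) ≤ α * 0 := by
      refine hψ 0 (dist L (T₁ L)) le_rfl dist_nonneg (Or.inr (Or.inr ?_))
      rwa [dist_comm (T₁ L) L] at hle
    have : dist L (T₁ L) = 0 := le_antisymm (by simpa using hb) dist_nonneg
    exact (eq_of_dist_eq_zero this).symm
  -- Step 5: L is a fixed point of T₂
  have hT2L : T₂ L = L := by
    have key : ∀ k, dist (u (2*k+1)) (T₂ L) ≤
        ψ (dist (u (2*k)) L) (dist (u (2*k)) (u (2*k+1))) (dist L (T₂ L)) := by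
      intro k
      have := hT (u (2*k)) L
      rwa [← hu₁ k] at this
    have lhs : Filter.Tendsto (fun k => dist (u (2*k+1)) (T₂ L)) Filter.atTop
        (nhds (dist L (T₂ L))) := Filter.Tendsto.dist t1 tendsto_const_nhds
    have rhs : Filter.Tendsto
        (fun k => ψ (dist (u (2*k)) L) (dist (u (2*k)) (u (2*k+1))) (dist L (T₂ L)))
        Filter.atTop (nhds (ψ 0 0 (dist L (T₂ L)))) := by
      have ha : Filter.Tendsto (fun k => dist (u (2*k)) L) Filter.atTop (nhds 0) := by
        have := Filter.Tendsto.dist t0 (tendsto_const_nhds (x := L))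
        simpa using this
      have hb : Filter.Tendsto (fun k => dist (u (2*k)) (u (2*k+1))) Filter.atTop (nhds 0) := by
        have := Filter.Tendsto.dist t0 t1
        simpa using this
      have := (hcont.tendsto (0, 0, dist L (T₂ L))).comp
        (ha.prodMk_nhds (hb.prodMk_nhds (tendsto_const_nhds (x := dist L (T₂ L)))))
      exact this
    have hle : dist L (T₂ L) ≤ ψ 0 0 (dist L (T₂ L)) :=
      le_of_tendsto_of_tendsto' lhs rhs key
    have hb : dist L (T₂ L) ≤ α * 0 :=
      hψ 0 (dist L (T₂ L)) le_rfl dist_nonneg (Or.inl hle)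
    have : dist L (T₂ L) = 0 := le_antisymm (by simpa using hb) dist_nonneg
    exact (eq_of_dist_eq_zero this).symm
  have hLz : L = z := hzuniq L ⟨hT1L, hT2L⟩
  subst hLz
  -- Final estimate
  intro n hn
  have hmain := dist_le_of_le_geometric_of_tendsto α (dist (u 0) (u 1)) hα1 hgeo hL n
  calc dist (u n) L ≤ dist (u 0) (u 1) * α ^ n / (1 - α) := hmain
    _ = α ^ n / (1 - α) * dist (u 0) (u 1) := by ring
    _ ≤ α ^ (n - 1) / (1 - α) * dist (u 0) (u 1) := by
        have h1α : (0:ℝ) < 1 - α := by linarith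
        have hp : α ^ n ≤ α ^ (n - 1) := pow_le_pow_of_le_one hα0 hα1.le (Nat.sub_le n 1)
        exact mul_le_mul_of_nonneg_right ((div_le_div_iff_of_pos_right h1α).mpr hp) dist_nonneg
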